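/- Fix an odd positive integer ℓ. There exists μ₀ > 0 such that for every real μ with |μ| > μ₀, the (ℓ+1) × (ℓ+1) matrix A⁺(μ), whose (i,j)-entry (for 1 ≤ i,j ≤ ℓ+1) is m_{i+j-1}(μ), is nonsingular. -/

import Mathlib

open MeasureTheory ProbabilityTheory

/-- The k-th raw moment of the Gaussian N(μ,1). -/
noncomputable def gaussMoment (μ : ℝ) (k : ℕ) : ℝ :=
  ∫ x, x ^ k ∂(gaussianReal μ 1)

/-- The (ℓ+1) × (ℓ+1) Hankel matrix whose (i,j)-entry (1 ≤ i,j ≤ ℓ+1) is m_{i+j-1}(μ). -/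
noncomputable def Aplus (ℓ : ℕ) (μ : ℝ) : Matrix (Fin (ℓ + 1)) (Fin (ℓ + 1)) ℝ :=
  Matrix.of fun i j => gaussMoment μ (i.val + j.val + 1)

section Aux

open Polynomial Finset Matrix

lemma integrable_pow_mul_gauss (k : ℕ) :
    Integrable (fun x : ℝ => x ^ k * Real.exp (-(1/2 : ℝ) * x ^ 2)) := by
  have h : (-1 : ℝ) < (k : ℝ) := by
    have : (0:ℝ) ≤ k := Nat.cast_nonneg k
    linarith
  simpa [Real.rpow_natCast] using
    integrable_rpow_mul_exp_neg_mul_sq (b := (1/2:ℝ)) (by norm_num) h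

lemma integrable_pow_gauss (k : ℕ) :
    Integrable (fun x : ℝ => x ^ k) (gaussianReal 0 1) := by
  rw [gaussianReal_of_var_ne_zero _ one_ne_zero,
    integrable_withDensity_iff (measurable_gaussianPDF _ _)
      (ae_of_all _ fun x => ENNReal.ofReal_lt_top)]
  have h : (fun x : ℝ => (Real.sqrt (2*Real.pi))⁻¹ * (x ^ k * Real.exp (-(1/2:ℝ) * x ^ 2)))
      = fun x => x ^ k * (gaussianPDF 0 1 x).toReal := by
    funext x
    rw [gaussianPDF, ENNReal.toReal_ofReal (gaussianPDFReal_nonneg _ _ _), gaussianPDFReal]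
    push_cast
    ring_nf
  rw [← h]
  exact (integrable_pow_mul_gauss k).const_mul _

lemma integrable_term (c μ : ℝ) (m : ℕ) :
    Integrable (fun x : ℝ => c * (x ^ (m+1) + μ * x ^ m)) (gaussianReal 0 1) := by
  exact ((integrable_pow_gauss (m+1)).add ((integrable_pow_gauss m).const_mul μ)).const_mul c

lemma integral_term (c μ : ℝ) (m : ℕ) :
    ∫ x, c * (x ^ (m+1) + μ * x ^ m) ∂(gaussianReal 0 1)
      = c * (μ * gaussMoment 0 m + gaussMoment 0 (m+1)) := by
  rw [integral_const_mul, integral_add (integrable_pow_gauss (m+1))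
    ((integrable_pow_gauss m).const_mul μ), integral_const_mul, gaussMoment, gaussMoment]
  ring

lemma moment_expand (μ : ℝ) (i k : ℕ) :
    gaussMoment μ (i + k + 1) = ∑ j ∈ range (i+1), ∑ l ∈ range (k+1),
      ((i.choose j : ℝ) * μ^(i-j)) *
        (μ * gaussMoment 0 (j+l) + gaussMoment 0 (j+l+1)) *
        ((k.choose l : ℝ) * μ^(k-l)) := by
  have hmap : gaussianReal μ 1 = (gaussianReal 0 1).map (· + μ) := by
    rw [gaussianReal_map_add_const, zero_add]
  have h1 : gaussMoment μ (i+k+1) = ∫ x, (x + μ)^(i+k+1) ∂(gaussianReal 0 1) := by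
    rw [gaussMoment, hmap, integral_map (measurable_add_const μ).aemeasurable
      (measurable_id'.pow_const _).aestronglyMeasurable]
  have hpt : ∀ x : ℝ, (x + μ)^(i+k+1) = ∑ j ∈ range (i+1), ∑ l ∈ range (k+1),
      (((i.choose j : ℝ) * μ^(i-j)) * ((k.choose l : ℝ) * μ^(k-l)))
        * (x^(j+l+1) + μ * x^(j+l)) := by
    intro x
    rw [pow_add, pow_add, pow_one, add_pow, add_pow, Finset.sum_mul_sum, Finset.sum_mul]
    refine Finset.sum_congr rfl fun j hj => ?_
    rw [Finset.sum_mul]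
    refine Finset.sum_congr rfl fun l hl => ?_
    simp only [pow_add, pow_one]
    ring
  rw [h1]
  rw [integral_congr_ae (ae_of_all _ hpt)]
  rw [integral_finset_sum _ (fun j hj => integrable_finset_sum _ (fun l hl =>
    integrable_term _ μ (j+l)))]
  refine Finset.sum_congr rfl fun j hj => ?_
  rw [integral_finset_sum _ (fun l hl => integrable_term _ μ (j+l))]
  refine Finset.sum_congr rfl fun l hl => ?_
  rw [integral_term]
  ring

noncomputable def Tm (n : ℕ) (μ : ℝ) : Matrix (Fin n) (Fin n) ℝ :=
  Matrix.of fun i j => (Nat.choose i.val j.val : ℝ) * μ ^ (i.val - j.val)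

noncomputable def Bm (n : ℕ) (μ : ℝ) : Matrix (Fin n) (Fin n) ℝ :=
  Matrix.of fun j l => μ * gaussMoment 0 (j.val + l.val) + gaussMoment 0 (j.val + l.val + 1)

lemma moment_expand' (n : ℕ) (μ : ℝ) (i k : ℕ) (hi : i < n) (hk : k < n) :
    gaussMoment μ (i + k + 1) = ∑ j ∈ range n, ∑ l ∈ range n,
      ((i.choose j : ℝ) * μ^(i-j)) *
        (μ * gaussMoment 0 (j+l) + gaussMoment 0 (j+l+1)) *
        ((k.choose l : ℝ) * μ^(k-l)) := by
  rw [moment_expand]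
  rw [Finset.sum_subset (Finset.range_subset_range.mpr hi) (fun j hj hj' => ?_)]
  · refine Finset.sum_congr rfl fun j hj => ?_
    refine Finset.sum_subset (Finset.range_subset_range.mpr hk) (fun l hl hl' => ?_)
    have : k.choose l = 0 := Nat.choose_eq_zero_of_lt (by simp [Finset.mem_range] at hl' ⊢; omega)
    simp [this]
  · have : i.choose j = 0 := Nat.choose_eq_zero_of_lt (by simp [Finset.mem_range] at hj' ⊢; omega)
    simp [this]

lemma factorizationA (n : ℕ) (μ : ℝ)
    (A : Matrix (Fin n) (Fin n) ℝ) (hA : ∀ i j, A i j = gaussMoment μ (i.val + j.val + 1)) :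
    A = Tm n μ * Bm n μ * (Tm n μ)ᵀ := by
  ext i k
  rw [hA, moment_expand' n μ i k i.isLt k.isLt]
  simp only [Matrix.mul_apply, Matrix.transpose_apply, Tm, Bm, Matrix.of_apply,
    Finset.sum_mul]
  rw [Finset.sum_comm]
  rw [← Fin.sum_univ_eq_sum_range (fun l => ∑ j ∈ range n,
      ((i.val.choose j : ℝ) * μ^(i.val-j)) *
        (μ * gaussMoment 0 (j+l) + gaussMoment 0 (j+l+1)) *
        ((k.val.choose l : ℝ) * μ^(k.val-l))) n]
  refine Finset.sum_congr rfl fun l _ => ?_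
  rw [← Fin.sum_univ_eq_sum_range (fun j =>
      ((i.val.choose j : ℝ) * μ^(i.val-j)) *
        (μ * gaussMoment 0 (j+l.val) + gaussMoment 0 (j+l.val+1)) *
        ((k.val.choose l.val : ℝ) * μ^(k.val-l.val))) n]

lemma det_Tm (n : ℕ) (μ : ℝ) : (Tm n μ).det = 1 := by
  rw [Matrix.det_of_lowerTriangular (Tm n μ) (fun i j hij => ?_)]
  · simp [Tm]
  · have : (i:ℕ) < (j:ℕ) := hij
    simp [Tm, Nat.choose_eq_zero_of_lt this]

noncomputable def Gm (n : ℕ) : Matrix (Fin n) (Fin n) ℝ :=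
  Matrix.of fun j l => gaussMoment 0 (j.val + l.val)

lemma det_Gm_ne_zero (n : ℕ) : (Gm n).det ≠ 0 := by
  intro hdet
  obtain ⟨c, hc0, hc⟩ := (Matrix.exists_mulVec_eq_zero_iff).mpr hdet
  -- the polynomial with coefficients c
  set P : Polynomial ℝ := ∑ j : Fin n, Polynomial.C (c j) * Polynomial.X ^ j.val with hP
  have hcoeff : ∀ j : Fin n, P.coeff j.val = c j := by
    intro j
    rw [hP, Polynomial.finset_sum_coeff]
    rw [Finset.sum_eq_single j]
    · simp
    · intro b _ hb
      rw [Polynomial.coeff_C_mul, Polynomial.coeff_X_pow, if_neg (fun h => hb (Fin.val_injective h).symm), mul_zero]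
    · simp
  have hPne : P ≠ 0 := by
    obtain ⟨j, hj⟩ := Function.ne_iff.mp hc0
    have hj' : c j ≠ 0 := by simpa using hj
    intro h
    exact hj' (by rw [← hcoeff j, h, Polynomial.coeff_zero])
  have heval : ∀ x : ℝ, (P.eval x)^2 = ∑ j : Fin n, ∑ l : Fin n,
      (c j * c l) * x ^ (j.val + l.val) := by
    intro x
    rw [hP, Polynomial.eval_finset_sum, sq, Finset.sum_mul_sum]
    refine Finset.sum_congr rfl fun j _ => Finset.sum_congr rfl fun l _ => ?_
    simp [pow_add]
    ring
  have hint : Integrable (fun x => (P.eval x)^2) (gaussianReal 0 1) := by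
    rw [show (fun x => (P.eval x)^2) = fun x => ∑ j : Fin n, ∑ l : Fin n,
        (c j * c l) * x ^ (j.val + l.val) from funext heval]
    exact integrable_finset_sum _ (fun j _ => integrable_finset_sum _
      (fun l _ => (integrable_pow_gauss _).const_mul _))
  have hI : ∫ x, (P.eval x)^2 ∂(gaussianReal 0 1) = 0 := by
    rw [integral_congr_ae (ae_of_all _ heval)]
    rw [integral_finset_sum _ (fun j _ => integrable_finset_sum _
      (fun l _ => (integrable_pow_gauss _).const_mul _))]
    have : ∀ j : Fin n, ∫ x, ∑ l : Fin n, (c j * c l) * x ^ (j.val + l.val) ∂(gaussianReal 0 1)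
        = ∑ l : Fin n, (c j * c l) * gaussMoment 0 (j.val + l.val) := by
      intro j
      rw [integral_finset_sum _ (fun l _ => (integrable_pow_gauss _).const_mul _)]
      exact Finset.sum_congr rfl fun l _ => by rw [integral_const_mul, gaussMoment]
    rw [Finset.sum_congr rfl (fun j _ => this j)]
    have hquad : ∑ j : Fin n, ∑ l : Fin n, (c j * c l) * gaussMoment 0 (j.val + l.val)
        = c ⬝ᵥ (Gm n *ᵥ c) := by
      simp only [dotProduct, mulVec, Gm, Matrix.of_apply, Finset.mul_sum]
      exact Finset.sum_congr rfl fun j _ => Finset.sum_congr rfl fun l _ => by ring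
    rw [hquad, hc, dotProduct_zero]
  -- a.e. zero
  have hae := (integral_eq_zero_iff_of_nonneg (fun x => sq_nonneg _) hint).mp hI
  have hae2 : ∀ᵐ x ∂(gaussianReal 0 1), P.eval x = 0 := by
    filter_upwards [hae] with x hx
    exact pow_eq_zero_iff two_ne_zero |>.mp (by simpa using hx)
  have hae' : (gaussianReal 0 1) {x | ¬ P.eval x = 0} = 0 := by
    rw [ae_iff] at hae2; exact hae2
  have hroot : (gaussianReal 0 1) {x | P.eval x = 0} = 0 := by
    refine gaussianReal_absolutelyContinuous 0 one_ne_zero ?_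
    exact Set.Finite.measure_zero (Polynomial.finite_setOf_isRoot hPne) _
  have : (gaussianReal 0 1) Set.univ = 0 := by
    have hsub : (Set.univ : Set ℝ) ⊆ {x | P.eval x = 0} ∪ {x | P.eval x ≠ 0} := by
      intro x _; by_cases h : P.eval x = 0 <;> simp [h]
    exact le_antisymm (le_trans (measure_mono hsub)
      (le_trans (measure_union_le _ _) (by rw [hroot]; rw [show (gaussianReal 0 1) {x | P.eval x ≠ 0} = 0 from hae']; simp))) zero_le
  simp [measure_univ] at this

/-- the polynomial whose evaluation at μ is det (Bm n μ) -/
noncomputable def qpoly (n : ℕ) : Polynomial ℝ :=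
  (Matrix.of fun j l : Fin n =>
    Polynomial.C (gaussMoment 0 (j.val + l.val)) * Polynomial.X
      + Polynomial.C (gaussMoment 0 (j.val + l.val + 1))).det

lemma eval_qpoly (n : ℕ) (μ : ℝ) : (qpoly n).eval μ = (Bm n μ).det := by
  rw [qpoly, ← Polynomial.coe_evalRingHom, RingHom.map_det]
  congr 1
  ext j l
  simp only [RingHom.mapMatrix_apply, Matrix.map_apply, Matrix.of_apply, coe_evalRingHom,
    eval_add, eval_mul, eval_C, eval_X, Bm]
  ring

/-- auxiliary polynomial: det of (g(j+l) + g(j+l+1) X) -/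
noncomputable def ppoly (n : ℕ) : Polynomial ℝ :=
  (Matrix.of fun j l : Fin n =>
    Polynomial.C (gaussMoment 0 (j.val + l.val))
      + Polynomial.C (gaussMoment 0 (j.val + l.val + 1)) * Polynomial.X).det

lemma ppoly_ne_zero (n : ℕ) : ppoly n ≠ 0 := by
  intro h
  have h0 : (ppoly n).eval 0 = (Gm n).det := by
    rw [ppoly, ← Polynomial.coe_evalRingHom, RingHom.map_det]
    congr 1
    ext j l
    simp [Gm]
  exact det_Gm_ne_zero n (by rw [← h0, h, Polynomial.eval_zero])

lemma qpoly_ne_zero (n : ℕ) : qpoly n ≠ 0 := by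
  obtain ⟨ε, hε⟩ := (((Polynomial.finite_setOf_isRoot (ppoly_ne_zero n)).union
    (Set.finite_singleton 0)).infinite_compl).nonempty
  simp only [Set.mem_compl_iff, Set.mem_union, Set.mem_singleton_iff, not_or,
    Set.mem_setOf_eq] at hε
  obtain ⟨hεroot, hε0⟩ := hε
  intro h
  have hB : Bm n ε⁻¹ = ε⁻¹ • (Matrix.of fun j l : Fin n =>
      gaussMoment 0 (j.val + l.val) + gaussMoment 0 (j.val + l.val + 1) * ε) := by
    ext j l
    simp only [Bm, Matrix.of_apply, Matrix.smul_apply, smul_eq_mul]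
    field_simp
  have h1 : (Bm n ε⁻¹).det = (ε⁻¹)^n * (ppoly n).eval ε := by
    rw [hB, Matrix.det_smul, Fintype.card_fin]
    congr 1
    rw [ppoly, ← Polynomial.coe_evalRingHom, RingHom.map_det]
    congr 1
    ext j l
    simp
  have h2 : (Bm n ε⁻¹).det ≠ 0 := by
    rw [h1]
    exact mul_ne_zero (pow_ne_zero _ (inv_ne_zero hε0)) (fun hh => hεroot hh)
  exact h2 (by rw [← eval_qpoly, h, Polynomial.eval_zero])

/-- For odd positive ℓ, there is μ₀ > 0 such that A⁺(μ) is nonsingular whenever |μ| > μ₀. -/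
theorem stmt2 (ℓ : ℕ) (hpos : 0 < ℓ) (hodd : Odd ℓ) :
    ∃ μ₀ : ℝ, 0 < μ₀ ∧ ∀ μ : ℝ, μ₀ < |μ| → (Aplus ℓ μ).det ≠ 0 := by
  set n := ℓ + 1
  have hq := qpoly_ne_zero n
  have hfin : {x : ℝ | (qpoly n).IsRoot x}.Finite := Polynomial.finite_setOf_isRoot hq
  obtain ⟨M, hM⟩ := (hfin.image abs).bddAbove
  refine ⟨max M 0 + 1, by positivity, fun μ hμ => ?_⟩
  intro hdet
  have hfact : Aplus ℓ μ = Tm n μ * Bm n μ * (Tm n μ)ᵀ :=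
    factorizationA n μ (Aplus ℓ μ) (fun i j => rfl)
  have : (qpoly n).eval μ = 0 := by
    rw [eval_qpoly]
    have := hdet
    rw [hfact, Matrix.det_mul, Matrix.det_mul, Matrix.det_transpose, det_Tm] at this
    linarith [this]
  have hroot : μ ∈ {x : ℝ | (qpoly n).IsRoot x} := this
  have : |μ| ≤ M := hM (Set.mem_image_of_mem abs hroot)
  have : |μ| ≤ max M 0 := le_trans this (le_max_left _ _)
  linarith

end Aux
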